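/- Let B be a skew-symmetric N×N integer matrix, k ∈ {1,…,N}, and let μ_k be the corresponding seed mutation of y-variables in ℚ(y_1,…,y_N). For m = (m_1,…,m_N) ∈ ℤ^N write y^m = Π_{i=1}^{N} y_i^{m_i}. If B·m = 0, then the mutated variables satisfy Π_{i=1}^{N} (y′_i)^{m_i} = y^{A_k·m}, and moreover A_k·m ∈ ℤ^N lies in the kernel of the mutated matrix: μ_k(B)·(A_k·m) = 0. (Thus Laurent monomial Casimirs of B are carried by μ_k to Laurent monomial Casimirs of μ_k(B).) -/
import Mathlib


noncomputable section

/-- A Y-seed: a signed adjacency (integer) matrix together with `y`-variables in a field. -/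
structure YSeed (V K : Type) where
  B : Matrix V V ℤ
  y : V → K

/-- The matrix `A_k` attached to a matrix `B` and a vertex `k`. -/
def Amat {V : Type} [DecidableEq V] (B : Matrix V V ℤ) (k : V) : Matrix V V ℤ :=
  Matrix.of fun i j =>
    if i = k then (if j = k then -1 else max (B k j) 0)
    else if i = j then 1 else 0

/-- Matrix mutation in direction `k`: `μ_k(B) = Aᵀ B A`. -/
def mutB {V : Type} [Fintype V] [DecidableEq V] (B : Matrix V V ℤ) (k : V) : Matrix V V ℤ :=
  (Amat B k).transpose * B * Amat B k

/-- Mutation of the `y`-variables in direction `k`. -/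
def mutY {V : Type} [DecidableEq V] {K : Type} [Field K]
    (B : Matrix V V ℤ) (k : V) (y : V → K) : V → K := fun i =>
  if i = k then (y k)⁻¹
  else y i * (1 + y k) ^ max (B i k) 0 / (1 + (y k)⁻¹) ^ max (B k i) 0

/-- Seed mutation in direction `k`. -/
def mutSeed {V : Type} [Fintype V] [DecidableEq V] {K : Type} [Field K]
    (s : YSeed V K) (k : V) : YSeed V K :=
  ⟨mutB s.B k, mutY s.B k s.y⟩

/-- Apply the seed mutations at the vertices of a list, head first. -/
def mutList {V : Type} [Fintype V] [DecidableEq V] {K : Type} [Field K]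
    (s : YSeed V K) : List V → YSeed V K
  | [] => s
  | k :: ks => mutList (mutSeed s k) ks

/-- The action of a permutation of the vertices on a seed: it permutes the rows and
columns of `B` and sends `y i` to `y (σ i)`. -/
def permSeed {V K : Type} (σ : Equiv.Perm V) (s : YSeed V K) : YSeed V K :=
  ⟨Matrix.of fun i j => s.B (σ i) (σ j), fun i => s.y (σ i)⟩

/-- The reflection associated with the oriented cycle `c 0 → c 1 → ⋯ → c (r-1) → c 0`:
the mutations at `c 0, …, c (r-2)` in this order, then the transposition of the vertices
`c (r-2)` and `c (r-1)`, then the mutations at `c (r-2), …, c 0` in this order. -/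
def reflect {V : Type} [Fintype V] [DecidableEq V] {K : Type} [Field K]
    {r : ℕ} (c : Fin r → V) (s : YSeed V K) : YSeed V K :=
  if h : 2 ≤ r then
    let up : List V := ((List.finRange r).dropLast).map c
    mutList
      (permSeed (Equiv.swap (c ⟨r - 2, by omega⟩) (c ⟨r - 1, by omega⟩)) (mutList s up))
      up.reverse
  else s

/-- The field of rational functions over `ℚ` with one generator for each vertex in `V`. -/
abbrev RF (V : Type) : Type := FractionRing (MvPolynomial V ℚ)

/-- The generators (the `y`-variables) of `RF V`. -/
def ygen (V : Type) : V → RF V := fun v =>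
  algebraMap (MvPolynomial V ℚ) (RF V) (MvPolynomial.X v)

/-- The signed adjacency matrix of the standard `n`-cycle `0 → 1 → ⋯ → n-1 → 0` on the
vertex set `ZMod n` (for `n = 2` there are no edges). -/
def cycMat (n : ℕ) : Matrix (ZMod n) (ZMod n) ℤ :=
  if 3 ≤ n then Matrix.of (fun i j => if j = i + 1 then 1 else if i = j + 1 then -1 else 0)
  else 0

-- auxiliary lemmas
lemma prod_zpow_sum' {K ι : Type} [Field K] {c : K} (hc : c ≠ 0) (s : Finset ι) (f : ι → ℤ) :
    ∏ i ∈ s, c ^ (f i) = c ^ (∑ i ∈ s, f i) := by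
  classical
  induction s using Finset.cons_induction with
  | empty => simp
  | cons a s ha ih => simp [Finset.prod_insert ha, Finset.sum_insert ha, ih, zpow_add₀ hc]

variable {N : ℕ} (B : Matrix (Fin N) (Fin N) ℤ) (k : Fin N) (v : Fin N → ℤ)

lemma mulVec_Amat_ne {i : Fin N} (hik : i ≠ k) : (Amat B k).mulVec v i = v i := by
  simp [Matrix.mulVec, dotProduct, Amat, hik]

lemma mulVec_Amat_k :
    (Amat B k).mulVec v k = -v k + ∑ j ∈ Finset.univ.erase k, max (B k j) 0 * v j := by
  rw [Matrix.mulVec, dotProduct, ← Finset.add_sum_erase _ _ (Finset.mem_univ k)]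
  congr 1
  · simp [Amat]
  · exact Finset.sum_congr rfl fun j hj => by
      simp [Amat, (Finset.mem_erase.mp hj).1]

lemma Amat_invol : (Amat B k).mulVec ((Amat B k).mulVec v) = v := by
  funext i
  by_cases hik : i = k
  · rw [hik]
    have hsum : ∑ j ∈ Finset.univ.erase k, max (B k j) 0 * (Amat B k).mulVec v j
        = ∑ j ∈ Finset.univ.erase k, max (B k j) 0 * v j :=
      Finset.sum_congr rfl fun j hj => by
        rw [mulVec_Amat_ne B k v (Finset.mem_erase.mp hj).1]
    rw [mulVec_Amat_k, mulVec_Amat_k, hsum]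
    ring
  · rw [mulVec_Amat_ne B k _ hik, mulVec_Amat_ne B k v hik]


/-- if `m ∈ ℤᴺ` lies in the kernel of the skew-symmetric matrix `B`, then
the Laurent monomial `y^m` mutates into `y^{A_k m}`, and `A_k m` lies in the kernel of
the mutated matrix `μ_k(B)`. -/
theorem stmt18 (N : ℕ) (B : Matrix (Fin N) (Fin N) ℤ) (hskew : B.transpose = -B)
    (k : Fin N) (m : Fin N → ℤ) (hm : B.mulVec m = 0) :
    (∏ i, (mutY B k (ygen (Fin N)) i) ^ (m i))
      = (∏ i, (ygen (Fin N) i) ^ ((Amat B k).mulVec m i)) ∧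
    (mutB B k).mulVec ((Amat B k).mulVec m) = 0 := by
  classical
  have hbk : ∀ i j, B i j = -B j i := by
    intro i j
    have := congrFun (congrFun hskew j) i
    simpa [Matrix.transpose_apply] using this
  have hBkk : B k k = 0 := by have := hbk k k; omega
  set y := ygen (Fin N) with hydef
  have hinj := IsFractionRing.injective (MvPolynomial (Fin N) ℚ) (RF (Fin N))
  have hy : ∀ v, y v ≠ 0 := by
    intro v h
    apply MvPolynomial.X_ne_zero (R := ℚ) (σ := Fin N) v
    apply hinj
    rw [map_zero]
    simpa [hydef, ygen] using h
  have h1 : (1 : RF (Fin N)) + y k ≠ 0 := by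
    have : (1 : RF (Fin N)) + y k
        = algebraMap (MvPolynomial (Fin N) ℚ) (RF (Fin N)) (1 + MvPolynomial.X k) := by
      simp [hydef, ygen, map_add]
    rw [this]
    intro h
    have h2 : (1 + MvPolynomial.X k : MvPolynomial (Fin N) ℚ) = 0 := by
      apply hinj; rw [map_zero]; exact h
    have := congrArg (MvPolynomial.coeff 0) h2
    simp [MvPolynomial.coeff_zero_X] at this
  have hb : (y k) * (1 + (y k)⁻¹) = 1 + y k := by
    rw [mul_add, mul_one, mul_inv_cancel₀ (hy k), add_comm]
  have h1i : (1 : RF (Fin N)) + (y k)⁻¹ ≠ 0 := by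
    intro h
    have hb' := hb
    rw [h, mul_zero] at hb'
    exact h1 hb'.symm
  -- the per-factor formula
  have hfac : ∀ i, i ≠ k →
      mutY B k y i = y i * (1 + y k) ^ (B i k) * (y k) ^ (max (B k i) 0) := by
    intro i hik
    rw [mutY, if_neg hik, div_eq_iff (zpow_ne_zero _ h1i)]
    calc y i * (1 + y k) ^ max (B i k) 0
        = y i * (1 + y k) ^ (B i k + max (B k i) 0) := by
          rw [show B i k + max (B k i) 0 = max (B i k) 0 by have := hbk k i; omega]
      _ = y i * ((1 + y k) ^ (B i k) * (1 + y k) ^ (max (B k i) 0)) := by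
          rw [← zpow_add₀ h1]
      _ = y i * (1 + y k) ^ (B i k) * ((y k) * (1 + (y k)⁻¹)) ^ (max (B k i) 0) := by
          rw [hb]; ring
      _ = y i * (1 + y k) ^ (B i k) * (y k) ^ max (B k i) 0 * (1 + (y k)⁻¹) ^ max (B k i) 0 := by
          rw [mul_zpow]; ring
  have hker : ∑ i ∈ Finset.univ.erase k, B i k * m i = 0 := by
    have h0 : ∑ i, B i k * m i = 0 := by
      have hk0 : ∑ j, B k j * m j = 0 := congrFun hm k
      calc ∑ i, B i k * m i = ∑ i, -(B k i * m i) := by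
            exact Finset.sum_congr rfl fun i _ => by rw [hbk i k]; ring
        _ = -∑ i, B k i * m i := by rw [Finset.sum_neg_distrib]
        _ = 0 := by rw [hk0, neg_zero]
    have h2 := (Finset.add_sum_erase Finset.univ
      (fun i => B i k * m i) (Finset.mem_univ k)).trans h0
    simpa [hBkk] using h2
  constructor
  · rw [← Finset.mul_prod_erase Finset.univ _ (Finset.mem_univ k),
      ← Finset.mul_prod_erase Finset.univ _ (Finset.mem_univ k)]
    have hL : ∏ i ∈ Finset.univ.erase k, (mutY B k y i) ^ (m i)
        = (∏ i ∈ Finset.univ.erase k, (y i) ^ (m i))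
          * (1 + y k) ^ (∑ i ∈ Finset.univ.erase k, B i k * m i)
          * (y k) ^ (∑ i ∈ Finset.univ.erase k, max (B k i) 0 * m i) := by
      rw [← prod_zpow_sum' h1, ← prod_zpow_sum' (hy k), ← Finset.prod_mul_distrib,
        ← Finset.prod_mul_distrib]
      refine Finset.prod_congr rfl fun i hi => ?_
      rw [hfac i (Finset.mem_erase.mp hi).1, mul_zpow, mul_zpow, ← zpow_mul, ← zpow_mul]
    have hR : ∏ i ∈ Finset.univ.erase k, (y i) ^ ((Amat B k).mulVec m i)
        = ∏ i ∈ Finset.univ.erase k, (y i) ^ (m i) :=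
      Finset.prod_congr rfl fun i hi => by
        rw [mulVec_Amat_ne B k m (Finset.mem_erase.mp hi).1]
    rw [hL, hR, hker, mutY, if_pos rfl, mulVec_Amat_k, zpow_add₀ (hy k), inv_zpow, ← zpow_neg, zpow_zero]
    ring
  · have hAA : (Amat B k).mulVec ((Amat B k).mulVec m) = m := Amat_invol B k m
    rw [mutB, ← Matrix.mulVec_mulVec, ← Matrix.mulVec_mulVec, hAA, hm,
      Matrix.mulVec_zero]
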